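/- Let (C_j, f_k^j) be an exact n-gon over 𝔽₂. Set C = ⊕_{j=0}^{n-1} C_j and D = Σ_{0≤j≤n-1} d_j + Σ_{0≤j<k≤n-1} f_k^j. Then D² = 0 and the complex (C, D) is acyclic, i.e., H(C, D) = 0. -/

import Mathlib

section Aux
set_option linter.unusedSectionVars false
variable {n : ℕ} [NeZero n] {V : Type} [AddCommGroup V] [Module (ZMod 2) V]

lemma char2_add_self (x : V) : x + x = 0 := by
  have h := two_smul (ZMod 2) x
  rw [show (2 : ZMod 2) = 0 from rfl, zero_smul] at h
  exact h.symm

lemma sum_filter_val_lt (l : ℕ) (hl : l ≤ n) (g : ZMod n → V) :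
    ∑ j ∈ Finset.univ.filter (fun j : ZMod n => j.val < l), g j
      = ∑ m ∈ Finset.range l, g (m : ZMod n) := by
  refine Finset.sum_nbij' (fun j => j.val) (fun m => (m : ZMod n)) ?_ ?_ ?_ ?_ ?_ <;>
    simp only [Finset.mem_filter, Finset.mem_range, Finset.mem_univ, true_and]
  · intro a ha; exact ha
  · intro a ha; rw [ZMod.val_natCast_of_lt (lt_of_lt_of_le ha hl)]; exact ha
  · intro a _; simp [ZMod.natCast_val, ZMod.cast_id]
  · intro a ha; rw [ZMod.val_natCast_of_lt (lt_of_lt_of_le ha hl)]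
  · intro a _; rw [ZMod.natCast_val, ZMod.cast_id]

lemma sum_filter_val_ge (l : ℕ) (g : ZMod n → V) :
    ∑ j ∈ Finset.univ.filter (fun j : ZMod n => l ≤ j.val), g j
      = ∑ m ∈ Finset.Ico l n, g (m : ZMod n) := by
  refine Finset.sum_nbij' (fun j => j.val) (fun m => (m : ZMod n)) ?_ ?_ ?_ ?_ ?_ <;>
    simp only [Finset.mem_filter, Finset.mem_Ico, Finset.mem_univ, true_and]
  · intro a ha; exact ⟨ha, ZMod.val_lt a⟩
  · intro a ha; rw [ZMod.val_natCast_of_lt ha.2]; exact ha.1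
  · intro a _; simp [ZMod.natCast_val, ZMod.cast_id]
  · intro a ha; rw [ZMod.val_natCast_of_lt ha.2]
  · intro a _; rw [ZMod.natCast_val, ZMod.cast_id]

lemma shift_Ico (a r : ℕ) (G : ℕ → V) :
    ∑ m ∈ Finset.Ico 1 r, G (a + m) = ∑ m ∈ Finset.Ico (a+1) (a+r), G m := by
  rw [Finset.sum_Ico_eq_sum_range, Finset.sum_Ico_eq_sum_range]
  have : a + r - (a + 1) = r - 1 := by omega
  rw [this]
  exact Finset.sum_congr rfl fun k _ => by ring_nf

lemma shift_split {s r L : ℕ} (hs : s < n) (hn : s + r = n + L) (G : ℕ → V)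
    (hG : ∀ m, G (n + m) = G m) :
    ∑ m ∈ Finset.Ico 1 r, G (s + m)
      = ∑ m ∈ Finset.Ico (s+1) n, G m + ∑ m ∈ Finset.range L, G m := by
  rw [shift_Ico, ← Finset.sum_Ico_consecutive G (show s + 1 ≤ n by omega) (show n ≤ s + r by omega)]
  congr 1
  rw [hn, Finset.sum_Ico_eq_sum_range]
  have : n + L - n = L := by omega
  rw [this, Finset.range_eq_Ico]
  exact Finset.sum_congr rfl fun k _ => hG k

lemma char2_final (a b c1 c2 : V) (h : c2 + b = a + c1) : (a + b) + (c1 + c2) = 0 := by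
  have h2 : (a + b) + (c1 + c2) = (c2 + b) + (a + c1) := by abel
  rw [h2, h]
  exact char2_add_self _

lemma char2_finalL (a b c1 c2 xl : V) (h : c2 + b = a + c1 + xl) : (a + b) + (c1 + c2) = xl := by
  have h2 : (a + b) + (c1 + c2) = (c2 + b) + (a + c1) := by abel
  rw [h2, h, show a + c1 + xl + (a + c1) = ((a + c1) + (a + c1)) + xl from by abel,
    char2_add_self, zero_add]

lemma findex {n : ℕ} [NeZero n] {M : ZMod n → Type} [∀ j, AddCommGroup (M j)]
    [∀ j, Module (ZMod 2) (M j)] (f : ∀ j k : ZMod n, M j →ₗ[ZMod 2] M k)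
    (a l : ZMod n) (i₁ i₂ : ZMod n) (h : i₁ = i₂) (v : M a) :
    f i₁ l (f a i₁ v) = f i₂ l (f a i₂ v) := by subst h; rfl

end Aux

/-- Let `(C_j, f_k^j)` be an exact `n`-gon over `𝔽₂` (encoded `n`-periodically: the complex at
the residue `j : ZMod n` is `M j` with differential `d j`, and `f j k : M j →ₗ M k` is the map
`f_k^j` for `j < k < j + n`, while `f j j` is the wrap-around map `f_{j+n}^j`).  Then the total
complex `(C, D)` with `C = ⊕_{j=0}^{n-1} C_j` and
`D = Σ_j d_j + Σ_{0 ≤ j < k ≤ n-1} f_k^j` satisfies `D² = 0` and is acyclic. -/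
theorem stmt2 (n : ℕ) [NeZero n] (M : ZMod n → Type)
    [∀ j, AddCommGroup (M j)] [∀ j, Module (ZMod 2) (M j)]
    (d : ∀ j, M j →ₗ[ZMod 2] M j)
    (f : ∀ j k : ZMod n, M j →ₗ[ZMod 2] M k)
    (hd : ∀ j, d j ∘ₗ d j = 0)
    (hrel : ∀ (j : ZMod n) (r : ℕ), 1 ≤ r → r < n →
      (∑ m ∈ Finset.Ico 1 r,
          f (j + (m : ZMod n)) (j + (r : ZMod n)) ∘ₗ f j (j + (m : ZMod n))) =
        d (j + (r : ZMod n)) ∘ₗ f j (j + (r : ZMod n)) +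
          f j (j + (r : ZMod n)) ∘ₗ d j)
    (hdiag : ∀ j : ZMod n,
      (∑ m ∈ Finset.Ico 1 n, f (j + (m : ZMod n)) j ∘ₗ f j (j + (m : ZMod n))) =
        d j ∘ₗ f j j + f j j ∘ₗ d j + LinearMap.id)
    (D : (∀ j, M j) →ₗ[ZMod 2] ∀ j, M j)
    (hD : D = LinearMap.pi (fun k =>
      d k ∘ₗ LinearMap.proj k +
        ∑ j ∈ Finset.univ.filter (fun j : ZMod n => j.val < k.val),
          f j k ∘ₗ LinearMap.proj j)) :
    D ∘ₗ D = 0 ∧ ∀ x, D x = 0 → ∃ y, D y = x := by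
  classical
  have hDapp : ∀ (x : ∀ j, M j) (k : ZMod n),
      D x k = d k (x k) + ∑ m ∈ Finset.range k.val, f (m : ZMod n) k (x (m : ZMod n)) := by
    intro x k
    rw [hD]
    simp only [LinearMap.pi_apply, LinearMap.add_apply, LinearMap.coe_comp, Function.comp_apply,
      LinearMap.proj_apply, LinearMap.sum_apply]
    congr 1
    exact sum_filter_val_lt k.val (le_of_lt (ZMod.val_lt k)) _
  have hdd : ∀ (j : ZMod n) (v : M j), d j (d j v) = 0 := fun j v => by
    have := LinearMap.congr_fun (hd j) v; simpa using this
  have hDD : ∀ x, D (D x) = 0 := by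
    intro x
    funext l
    have hL : l.val < n := ZMod.val_lt l
    have hcastl : ∀ a : ℕ, a + (l.val - a) = l.val → ((a : ZMod n) + ((l.val - a : ℕ) : ZMod n)) = l := by
      intro a ha
      rw [← Nat.cast_add, ha]
      simp [ZMod.natCast_val, ZMod.cast_id]
    rw [hDapp, hDapp]
    have expand : ∑ m ∈ Finset.range l.val, f (m : ZMod n) l (D x (m : ZMod n))
        = ∑ m ∈ Finset.range l.val, (f (m : ZMod n) l (d (m : ZMod n) (x (m : ZMod n)))
            + ∑ a ∈ Finset.range m, f (m : ZMod n) l (f (a : ZMod n) (m : ZMod n) (x (a : ZMod n)))) := by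
      refine Finset.sum_congr rfl fun m hm => ?_
      rw [hDapp, map_add, map_sum, ZMod.val_natCast_of_lt (lt_trans (Finset.mem_range.mp hm) hL)]
    rw [expand, map_add, map_sum, hdd, zero_add, Finset.sum_add_distrib]
    simp only [Finset.range_eq_Ico]
    rw [← Finset.sum_Ico_Ico_comm' 0 l.val
      (fun a m => f (m : ZMod n) l (f (a : ZMod n) (m : ZMod n) (x (a : ZMod n))))]
    show _ = (0 : M l)
    have merge : ∀ (A B : ℕ → M l), ((∑ a ∈ Finset.Ico 0 l.val, A a) + ∑ a ∈ Finset.Ico 0 l.val, B a)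
        = ∑ a ∈ Finset.Ico 0 l.val, (A a + B a) := fun A B => Finset.sum_add_distrib.symm
    rw [merge, merge]
    apply Finset.sum_eq_zero
    intro a ha
    have haL : a < l.val := (Finset.mem_Ico.mp ha).2
    have hr := LinearMap.congr_fun (hrel (a : ZMod n) (l.val - a) (by omega) (by omega)) (x (a : ZMod n))
    simp only [LinearMap.sum_apply, LinearMap.comp_apply, LinearMap.add_apply] at hr
    rw [hcastl a (by omega)] at hr
    have hswap : ∑ m' ∈ Finset.Ico 1 (l.val - a),
        f ((a : ZMod n) + (m' : ZMod n)) l (f (a : ZMod n) ((a : ZMod n) + (m' : ZMod n)) (x (a : ZMod n)))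
        = ∑ m ∈ Finset.Ico (a+1) l.val,
            f (m : ZMod n) l (f (a : ZMod n) (m : ZMod n) (x (a : ZMod n))) := by
      have h1 := shift_Ico a (l.val - a)
        (fun m => f (m : ZMod n) l (f (a : ZMod n) (m : ZMod n) (x (a : ZMod n))))
      rw [show a + (l.val - a) = l.val from by omega] at h1
      rw [← h1]
      refine Finset.sum_congr rfl fun m' _ => ?_
      exact findex f _ l _ _ (by push_cast; ring) _
    rw [hswap] at hr
    rw [hr, show ∀ (u v : M l), u + (v + (u + v)) = (u + u) + (v + v) from fun u v => by abel,
      char2_add_self, char2_add_self, add_zero]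
  have hDDmap : D ∘ₗ D = 0 := LinearMap.ext fun x => by
    simp only [LinearMap.comp_apply, LinearMap.zero_apply, hDD x]
  refine ⟨hDDmap, ?_⟩
  -- the contracting data
  set h : (∀ j, M j) →ₗ[ZMod 2] ∀ j, M j := LinearMap.pi (fun k =>
    ∑ j ∈ Finset.univ.filter (fun j : ZMod n => k.val ≤ j.val),
      f j k ∘ₗ LinearMap.proj j) with hh
  have hhapp : ∀ (x : ∀ j, M j) (k : ZMod n),
      h x k = ∑ m ∈ Finset.Ico k.val n, f (m : ZMod n) k (x (m : ZMod n)) := by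
    intro x k
    rw [hh]
    simp only [LinearMap.pi_apply, LinearMap.sum_apply, LinearMap.coe_comp, Function.comp_apply,
      LinearMap.proj_apply]
    exact sum_filter_val_ge k.val _
  have key : ∀ (x : ∀ j, M j) (l : ZMod n), (∀ j : ZMod n, j.val < l.val → x j = 0) →
      D (h x) l + h (D x) l = x l := by
    intro x l hx
    have hL : l.val < n := ZMod.val_lt l
    have hLl : ((l.val : ℕ) : ZMod n) = l := by simp [ZMod.natCast_val, ZMod.cast_id]
    have mergeI : ∀ (A B : ℕ → M l),
        ((∑ s ∈ Finset.Ico l.val n, A s) + ∑ s ∈ Finset.Ico l.val n, B s)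
          = ∑ s ∈ Finset.Ico l.val n, (A s + B s) := fun A B => Finset.sum_add_distrib.symm
    have eDh : D (h x) l
        = (∑ s ∈ Finset.Ico l.val n, d l (f (s : ZMod n) l (x (s : ZMod n))))
          + ∑ a ∈ Finset.range l.val, ∑ s ∈ Finset.Ico l.val n,
              f (a : ZMod n) l (f (s : ZMod n) (a : ZMod n) (x (s : ZMod n))) := by
      rw [hDapp]
      congr 1
      · rw [hhapp, map_sum]
      · refine Finset.sum_congr rfl fun a haa => ?_
        have haL : a < l.val := Finset.mem_range.mp haa
        rw [hhapp, ZMod.val_natCast_of_lt (lt_trans haL hL), map_sum]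
        symm
        apply Finset.sum_subset
        · exact Finset.Ico_subset_Ico (le_of_lt haL) le_rfl
        · intro m hm hnot
          have hm1 := Finset.mem_Ico.mp hm
          have hmL : m < l.val := by
            by_contra hc
            exact hnot (Finset.mem_Ico.mpr ⟨le_of_not_gt hc, hm1.2⟩)
          rw [hx (m : ZMod n) (by rwa [ZMod.val_natCast_of_lt hm1.2]), map_zero, map_zero]
    have ehD : h (D x) l
        = (∑ s ∈ Finset.Ico l.val n, f (s : ZMod n) l (d (s : ZMod n) (x (s : ZMod n))))
          + ∑ s ∈ Finset.Ico l.val n, ∑ a ∈ Finset.Ico l.val s,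
              f (s : ZMod n) l (f (a : ZMod n) (s : ZMod n) (x (a : ZMod n))) := by
      rw [hhapp, mergeI]
      refine Finset.sum_congr rfl fun m hm => ?_
      have hm1 := Finset.mem_Ico.mp hm
      rw [hDapp, ZMod.val_natCast_of_lt hm1.2, map_add, map_sum]
      congr 1
      symm
      apply Finset.sum_subset
      · intro a haa
        have := Finset.mem_Ico.mp haa
        exact Finset.mem_range.mpr this.2
      · intro a ha1 ha2
        have haa := Finset.mem_range.mp ha1
        have haL : a < l.val := by
          by_contra hc
          exact ha2 (Finset.mem_Ico.mpr ⟨le_of_not_gt hc, haa⟩)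
        rw [hx (a : ZMod n) (by rwa [ZMod.val_natCast_of_lt (lt_trans haa hm1.2)]),
          map_zero, map_zero]
    have hswapB : ∑ a ∈ Finset.range l.val, ∑ s ∈ Finset.Ico l.val n,
          f (a : ZMod n) l (f (s : ZMod n) (a : ZMod n) (x (s : ZMod n)))
        = ∑ s ∈ Finset.Ico l.val n, ∑ a ∈ Finset.range l.val,
            f (a : ZMod n) l (f (s : ZMod n) (a : ZMod n) (x (s : ZMod n))) :=
      Finset.sum_comm
    have hswapC : ∑ s ∈ Finset.Ico l.val n, ∑ a ∈ Finset.Ico l.val s,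
          f (s : ZMod n) l (f (a : ZMod n) (s : ZMod n) (x (a : ZMod n)))
        = ∑ s ∈ Finset.Ico l.val n, ∑ m ∈ Finset.Ico (s+1) n,
            f (m : ZMod n) l (f (s : ZMod n) (m : ZMod n) (x (s : ZMod n))) :=
      (Finset.sum_Ico_Ico_comm' l.val n
        (fun a m => f (m : ZMod n) l (f (a : ZMod n) (m : ZMod n) (x (a : ZMod n))))).symm
    rw [eDh, ehD, hswapB, hswapC, mergeI, mergeI, mergeI]
    rw [Finset.sum_eq_single_of_mem l.val (Finset.mem_Ico.mpr ⟨le_rfl, hL⟩)]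
    · -- diagonal term gives x l
      rw [hLl]
      have hdl := LinearMap.congr_fun (hdiag l) (x l)
      simp only [LinearMap.sum_apply, LinearMap.comp_apply, LinearMap.add_apply,
        LinearMap.id_apply] at hdl
      have hconv : ∑ m' ∈ Finset.Ico 1 n, f (l + (m' : ZMod n)) l (f l (l + (m' : ZMod n)) (x l))
          = (∑ m ∈ Finset.Ico (l.val + 1) n, f (m : ZMod n) l (f l (m : ZMod n) (x l)))
            + ∑ m ∈ Finset.range l.val, f (m : ZMod n) l (f l (m : ZMod n) (x l)) := by
        rw [show (∑ m' ∈ Finset.Ico 1 n, f (l + (m' : ZMod n)) l (f l (l + (m' : ZMod n)) (x l)))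
            = ∑ m' ∈ Finset.Ico 1 n,
                (fun m : ℕ => f (m : ZMod n) l (f l (m : ZMod n) (x l))) (l.val + m')
            from Finset.sum_congr rfl fun m' _ =>
              findex f l l _ _ (by push_cast [hLl]; try ring) (x l)]
        exact shift_split (s := l.val) (r := n) (L := l.val) hL (by omega)
          (fun m => f (m : ZMod n) l (f l (m : ZMod n) (x l)))
          (fun m => findex f l l _ _ (by push_cast [ZMod.natCast_self]; try ring) (x l))
      rw [hconv] at hdl
      exact char2_finalL _ _ _ _ _ hdl
    · -- off-diagonal terms vanish
      intro s hs hsne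
      have hs1 := Finset.mem_Ico.mp hs
      have hsL : l.val < s := lt_of_le_of_ne hs1.1 (Ne.symm hsne)
      have hr := LinearMap.congr_fun
        (hrel (s : ZMod n) (l.val + (n - s)) (by omega) (by omega)) (x (s : ZMod n))
      simp only [LinearMap.sum_apply, LinearMap.comp_apply, LinearMap.add_apply] at hr
      have hcast2 : (s : ZMod n) + ((l.val + (n - s) : ℕ) : ZMod n) = l := by
        rw [← Nat.cast_add, show s + (l.val + (n - s)) = n + l.val from by omega,
          Nat.cast_add, ZMod.natCast_self, zero_add, hLl]
      rw [hcast2] at hr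
      have hconv : ∑ m' ∈ Finset.Ico 1 (l.val + (n - s)),
            f ((s : ZMod n) + (m' : ZMod n)) l
              (f (s : ZMod n) ((s : ZMod n) + (m' : ZMod n)) (x (s : ZMod n)))
          = (∑ m ∈ Finset.Ico (s + 1) n,
                f (m : ZMod n) l (f (s : ZMod n) (m : ZMod n) (x (s : ZMod n))))
            + ∑ m ∈ Finset.range l.val,
                f (m : ZMod n) l (f (s : ZMod n) (m : ZMod n) (x (s : ZMod n))) := by
        rw [show (∑ m' ∈ Finset.Ico 1 (l.val + (n - s)),
              f ((s : ZMod n) + (m' : ZMod n)) l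
                (f (s : ZMod n) ((s : ZMod n) + (m' : ZMod n)) (x (s : ZMod n))))
            = ∑ m' ∈ Finset.Ico 1 (l.val + (n - s)),
                (fun m : ℕ => f (m : ZMod n) l
                  (f (s : ZMod n) (m : ZMod n) (x (s : ZMod n)))) (s + m')
            from Finset.sum_congr rfl fun m' _ =>
              findex f _ l _ _ (by push_cast; try ring) _]
        exact shift_split (s := s) (r := l.val + (n - s)) (L := l.val) hs1.2 (by omega)
          (fun m => f (m : ZMod n) l (f (s : ZMod n) (m : ZMod n) (x (s : ZMod n))))
          (fun m => findex f _ l _ _ (by push_cast [ZMod.natCast_self]; try ring) _)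
      rw [hconv] at hr
      exact char2_final _ _ _ _ hr
  intro x hx
  -- R = D∘h + h∘D + 1 is strictly triangular + 1; R^n = 0
  set R : Module.End (ZMod 2) (∀ j, M j) := D ∘ₗ h + h ∘ₗ D + LinearMap.id with hR
  have hRapp : ∀ z, R z = D (h z) + h (D z) + z := fun z => rfl
  have hRtri : ∀ (z : ∀ j, M j) (l : ZMod n), (∀ j : ZMod n, j.val < l.val → z j = 0) →
      R z l = 0 := by
    intro z l hz
    have : R z l = (D (h z) l + h (D z) l) + z l := rfl
    rw [this, key z l hz]
    exact char2_add_self _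
  have hRpow : ∀ (t : ℕ) (z : ∀ j, M j) (l : ZMod n), l.val < t → (R ^ t) z l = 0 := by
    intro t
    induction t with
    | zero => intro z l hl; omega
    | succ t ih =>
      intro z l hl
      rw [pow_succ']
      rw [Module.End.mul_apply]
      refine hRtri ((R ^ t) z) l fun j hj => ih z j ?_
      omega
  have hRn : (R : Module.End (ZMod 2) (∀ j, M j)) ^ n = 0 := by
    apply LinearMap.ext
    intro z
    funext l
    exact hRpow n z l (ZMod.val_lt l)
  have hcommDR : ∀ z, D (R z) = R (D z) := by
    intro z
    rw [hRapp, hRapp, map_add, map_add, hDD (h z), hDD z, map_zero]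
    abel
  have hcommpow : ∀ (t : ℕ) (z : ∀ j, M j), D ((R ^ t) z) = (R ^ t) (D z) := by
    intro t
    induction t with
    | zero => intro z; simp
    | succ t ih =>
      intro z
      rw [pow_succ', Module.End.mul_apply, Module.End.mul_apply, hcommDR, ih]
  set S : Module.End (ZMod 2) (∀ j, M j) := ∑ t ∈ Finset.range n, R ^ t with hS
  have hDS : ∀ z, D (S z) = S (D z) := by
    intro z
    rw [hS]
    simp only [LinearMap.coe_sum, Finset.sum_apply, map_sum]
    exact Finset.sum_congr rfl fun t _ => hcommpow t z
  have hgeom : S * (R - 1) = -1 := by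
    rw [hS, geom_sum_mul, hRn, zero_sub]
  refine ⟨S (h x), ?_⟩
  have e1 : D (h x) = R x - x := by
    have := hRapp x
    rw [hx, map_zero, add_zero] at this
    rw [this]
    abel
  have e2 : S (R x - x) = (S * (R - 1)) x := by
    rw [Module.End.mul_apply, LinearMap.sub_apply, Module.End.one_apply]
  calc D (S (h x)) = S (D (h x)) := hDS _
    _ = S (R x - x) := by rw [e1]
    _ = (S * (R - 1)) x := e2
    _ = -x := by rw [hgeom]; simp
    _ = x := neg_eq_of_add_eq_zero_left (char2_add_self x)
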